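/- arXiv:2505.12841 — 6 statements merged into one kernel-verified Lean document; each statement's English description precedes it below -/
import Mathlib

section
/- Pseudo-conformal transformation of Ψ-spinors: let t ∈ ℝ, t ≠ 0, and let U, ψ₁, ψ₂ : ℂ → ℂ be real-differentiable functions with U real-valued such that ∂ψ₂(w) + U(w)ψ₁(w) = 0 and −∂̄ψ₁(w) + U(w)ψ₂(w) = 0 for all w ∈ ℂ. Define Ũ(z) = (1/t)·exp(−i(z² + conj(z)²)/(8t))·U(z/t), ψ̃₁(z) = exp(i z²/(8t))·ψ₁(z/t), and ψ̃₂(z) = exp(−i conj(z)²/(8t))·ψ₂(z/t). Then for every z ∈ ℂ one has ∂ψ̃₂(z) + Ũ(z)·ψ̃₁(z) = 0 and −∂̄ψ̃₁(z) + conj(Ũ(z))·ψ̃₂(z) = 0. -/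
open Complex

/-- Wirtinger derivative ∂f(z) = (1/2)(Df(z)(1) − i·Df(z)(i)). -/
noncomputable def wirtingerD (f : ℂ → ℂ) (z : ℂ) : ℂ :=
  (1 / 2) * (fderiv ℝ f z 1 - Complex.I * fderiv ℝ f z Complex.I)

/-- Conjugate Wirtinger derivative ∂̄f(z) = (1/2)(Df(z)(1) + i·Df(z)(i)). -/
noncomputable def wirtingerDBar (f : ℂ → ℂ) (z : ℂ) : ℂ :=
  (1 / 2) * (fderiv ℝ f z 1 + Complex.I * fderiv ℝ f z Complex.I)

lemma wD_mul (f g : ℂ → ℂ) (z : ℂ) (hf : DifferentiableAt ℝ f z) (hg : DifferentiableAt ℝ g z) :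
    wirtingerD (fun w => f w * g w) z = wirtingerD f z * g z + f z * wirtingerD g z := by
  unfold wirtingerD
  rw [fderiv_fun_mul hf hg]
  simp only [ContinuousLinearMap.add_apply, ContinuousLinearMap.coe_smul', Pi.smul_apply,
    smul_eq_mul]
  ring

lemma wDBar_mul (f g : ℂ → ℂ) (z : ℂ) (hf : DifferentiableAt ℝ f z)
    (hg : DifferentiableAt ℝ g z) :
    wirtingerDBar (fun w => f w * g w) z = wirtingerDBar f z * g z + f z * wirtingerDBar g z := by
  unfold wirtingerDBar
  rw [fderiv_fun_mul hf hg]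
  simp only [ContinuousLinearMap.add_apply, ContinuousLinearMap.coe_smul', Pi.smul_apply,
    smul_eq_mul]
  ring

lemma wD_holo {f : ℂ → ℂ} {z d : ℂ} (hf : HasDerivAt f d z) :
    wirtingerD f z = d ∧ wirtingerDBar f z = 0 := by
  have h := (hf.hasFDerivAt.restrictScalars ℝ).fderiv
  have hI : Complex.I * (Complex.I * d) = -d := by
    rw [← mul_assoc, Complex.I_mul_I]; ring
  unfold wirtingerD wirtingerDBar
  rw [h]
  simp only [ContinuousLinearMap.coe_restrictScalars', ContinuousLinearMap.smulRight_apply,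
    ContinuousLinearMap.one_apply, ContinuousLinearMap.toSpanSingleton_apply, smul_eq_mul, hI]
  constructor <;> ring

lemma wD_antiholo {F : ℂ → ℂ} {z d : ℂ} (hF : HasDerivAt F d ((starRingEnd ℂ) z)) :
    wirtingerD (fun w => F ((starRingEnd ℂ) w)) z = 0 ∧
    wirtingerDBar (fun w => F ((starRingEnd ℂ) w)) z = d := by
  have hc : HasFDerivAt (fun w : ℂ => (starRingEnd ℂ) w)
      (Complex.conjCLE.toContinuousLinearMap) z :=
    Complex.conjCLE.toContinuousLinearMap.hasFDerivAt
  have h := ((hF.hasFDerivAt.restrictScalars ℝ).comp z hc).fderiv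
  have hI : Complex.I * (Complex.I * d) = -d := by
    rw [← mul_assoc, Complex.I_mul_I]; ring
  unfold wirtingerD wirtingerDBar
  rw [show (fun w => F ((starRingEnd ℂ) w)) = F ∘ (starRingEnd ℂ) from rfl, h]
  simp only [ContinuousLinearMap.coe_comp', Function.comp_apply,
    ContinuousLinearEquiv.coe_coe, Complex.conjCLE_apply,
    ContinuousLinearMap.coe_restrictScalars', ContinuousLinearMap.smulRight_apply,
    ContinuousLinearMap.one_apply, ContinuousLinearMap.toSpanSingleton_apply, smul_eq_mul, map_one, Complex.conj_I, mul_neg, hI]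
  constructor <;> ring_nf <;> rw [Complex.I_sq] <;> ring

lemma wD_scale {f : ℂ → ℂ} {z : ℂ} {t : ℝ}
    (hf : DifferentiableAt ℝ f (z / (t : ℂ))) :
    wirtingerD (fun w => f (w / (t : ℂ))) z = (1 / (t : ℂ)) * wirtingerD f (z / (t : ℂ)) ∧
    wirtingerDBar (fun w => f (w / (t : ℂ))) z
      = (1 / (t : ℂ)) * wirtingerDBar f (z / (t : ℂ)) := by
  have hfe : (fun w : ℂ => w / (t : ℂ))
      = fun w => ((1 / (t : ℂ)) • ContinuousLinearMap.id ℝ ℂ) w := by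
    funext w
    simp [div_eq_inv_mul, smul_eq_mul, mul_comm]
  have hL : HasFDerivAt (fun w : ℂ => w / (t : ℂ))
      ((1 / (t : ℂ)) • ContinuousLinearMap.id ℝ ℂ) z := by
    rw [hfe]; exact ((1 / (t : ℂ)) • ContinuousLinearMap.id ℝ ℂ).hasFDerivAt
  have h := ((hf.hasFDerivAt).comp z hL).fderiv
  unfold wirtingerD wirtingerDBar
  rw [show (fun w => f (w / (t : ℂ))) = f ∘ (fun w : ℂ => w / (t : ℂ)) from rfl, h]
  have e1 : ((1 / (t : ℂ)) • (1 : ℂ)) = (t⁻¹ : ℝ) • (1 : ℂ) := by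
    simp [Complex.real_smul, smul_eq_mul]
  have e2 : ((1 / (t : ℂ)) • Complex.I) = (t⁻¹ : ℝ) • Complex.I := by
    simp [Complex.real_smul, smul_eq_mul]
  simp only [ContinuousLinearMap.coe_comp', Function.comp_apply,
    ContinuousLinearMap.coe_smul', Pi.smul_apply, ContinuousLinearMap.coe_id', id_eq,
    e1, e2, map_smul]
  simp only [Complex.real_smul, Complex.ofReal_inv]
  constructor <;> ring

theorem stmt_2
    (t : ℝ) (ht : t ≠ 0)
    (U ψ₁ ψ₂ : ℂ → ℂ)
    (hUdiff : Differentiable ℝ U)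
    (hψ₁diff : Differentiable ℝ ψ₁)
    (hψ₂diff : Differentiable ℝ ψ₂)
    (hUreal : ∀ w, (starRingEnd ℂ) (U w) = U w)
    (hdirac₁ : ∀ w, wirtingerD ψ₂ w + U w * ψ₁ w = 0)
    (hdirac₂ : ∀ w, -wirtingerDBar ψ₁ w + U w * ψ₂ w = 0)
    (Ut ψt₁ ψt₂ : ℂ → ℂ)
    (hUt : ∀ z, Ut z =
      (1 / (t : ℂ)) *
        Complex.exp (-Complex.I * (z ^ 2 + ((starRingEnd ℂ) z) ^ 2) / (8 * (t : ℂ))) *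
        U (z / (t : ℂ)))
    (hψt₁ : ∀ z, ψt₁ z =
      Complex.exp (Complex.I * z ^ 2 / (8 * (t : ℂ))) * ψ₁ (z / (t : ℂ)))
    (hψt₂ : ∀ z, ψt₂ z =
      Complex.exp (-Complex.I * ((starRingEnd ℂ) z) ^ 2 / (8 * (t : ℂ))) * ψ₂ (z / (t : ℂ))) :
    ∀ z : ℂ,
      wirtingerD ψt₂ z + Ut z * ψt₁ z = 0 ∧
      -wirtingerDBar ψt₁ z + (starRingEnd ℂ) (Ut z) * ψt₂ z = 0 := by
  intro z
  have ht' : (t : ℂ) ≠ 0 := Complex.ofReal_ne_zero.mpr ht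
  have ht8 : (8 : ℂ) * (t : ℂ) ≠ 0 := by
    simp [ht']
  set s : ℂ := z / (t : ℂ) with hs
  -- holomorphic factor for ψt₁
  set F₁ : ℂ → ℂ := fun w => Complex.exp (Complex.I * w ^ 2 / (8 * (t : ℂ))) with hF₁def
  have hF₁diff : Differentiable ℂ F₁ := by
    apply Differentiable.cexp
    fun_prop
  -- antiholomorphic "core" for ψt₂
  set F₂ : ℂ → ℂ := fun w => Complex.exp (-Complex.I * w ^ 2 / (8 * (t : ℂ))) with hF₂def
  have hF₂diff : Differentiable ℂ F₂ := by
    apply Differentiable.cexp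
    fun_prop
  have hconj : Differentiable ℝ (fun w : ℂ => (starRingEnd ℂ) w) :=
    Complex.conjCLE.differentiable
  have hdiv : Differentiable ℝ (fun w : ℂ => w / (t : ℂ)) :=
    ((differentiable_id.div_const (t : ℂ)).restrictScalars ℝ)
  have hg₂diff : DifferentiableAt ℝ (fun w : ℂ => F₂ ((starRingEnd ℂ) w)) z :=
    (((hF₂diff.restrictScalars ℝ).comp hconj) z)
  have hg₁diff : DifferentiableAt ℝ (fun w : ℂ => F₁ w) z :=
    (hF₁diff.restrictScalars ℝ) z
  have hh₂diff : DifferentiableAt ℝ (fun w : ℂ => ψ₂ (w / (t : ℂ))) z :=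
    ((hψ₂diff.comp hdiv) z)
  have hh₁diff : DifferentiableAt ℝ (fun w : ℂ => ψ₁ (w / (t : ℂ))) z :=
    ((hψ₁diff.comp hdiv) z)
  -- rewrite the transformed spinors as products
  have hψt₂fun : ψt₂ = fun w => (fun w => F₂ ((starRingEnd ℂ) w)) w *
      (fun w => ψ₂ (w / (t : ℂ))) w := by
    funext w; exact hψt₂ w
  have hψt₁fun : ψt₁ = fun w => (fun w => F₁ w) w * (fun w => ψ₁ (w / (t : ℂ))) w := by
    funext w; exact hψt₁ w
  -- Wirtinger derivatives of the factors
  have hF₂deriv : HasDerivAt F₂ (deriv F₂ ((starRingEnd ℂ) z)) ((starRingEnd ℂ) z) :=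
    (hF₂diff ((starRingEnd ℂ) z)).hasDerivAt
  have hF₁deriv : HasDerivAt F₁ (deriv F₁ z) z := (hF₁diff z).hasDerivAt
  have hg₂D : wirtingerD (fun w => F₂ ((starRingEnd ℂ) w)) z = 0 := (wD_antiholo hF₂deriv).1
  have hg₁DBar : wirtingerDBar (fun w => F₁ w) z = 0 := (wD_holo hF₁deriv).2
  have hh₂D : wirtingerD (fun w => ψ₂ (w / (t : ℂ))) z = (1 / (t : ℂ)) * wirtingerD ψ₂ s :=
    (wD_scale (hψ₂diff s)).1
  have hh₁DBar : wirtingerDBar (fun w => ψ₁ (w / (t : ℂ))) z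
      = (1 / (t : ℂ)) * wirtingerDBar ψ₁ s := (wD_scale (hψ₁diff s)).2
  -- Dirac relations at s
  have hd1 : wirtingerD ψ₂ s = -(U s * ψ₁ s) := by linear_combination hdirac₁ s
  have hd2 : wirtingerDBar ψ₁ s = U s * ψ₂ s := by linear_combination -hdirac₂ s
  -- exponential identities
  have hexp1 : Complex.exp (-Complex.I * (z ^ 2 + ((starRingEnd ℂ) z) ^ 2) / (8 * (t : ℂ))) *
      Complex.exp (Complex.I * z ^ 2 / (8 * (t : ℂ)))
      = Complex.exp (-Complex.I * ((starRingEnd ℂ) z) ^ 2 / (8 * (t : ℂ))) := by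
    rw [← Complex.exp_add]
    congr 1
    field_simp
    ring
  have hexp2 : Complex.exp (Complex.I * (z ^ 2 + ((starRingEnd ℂ) z) ^ 2) / (8 * (t : ℂ))) *
      Complex.exp (-Complex.I * ((starRingEnd ℂ) z) ^ 2 / (8 * (t : ℂ)))
      = Complex.exp (Complex.I * z ^ 2 / (8 * (t : ℂ))) := by
    rw [← Complex.exp_add]
    congr 1
    field_simp
    ring
  -- conjugate of Ut
  have hUtconj : (starRingEnd ℂ) (Ut z) =
      (1 / (t : ℂ)) *
        Complex.exp (Complex.I * (z ^ 2 + ((starRingEnd ℂ) z) ^ 2) / (8 * (t : ℂ))) *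
        U s := by
    have harg : (starRingEnd ℂ)
        (-Complex.I * (z ^ 2 + ((starRingEnd ℂ) z) ^ 2) / (8 * (t : ℂ)))
        = Complex.I * (z ^ 2 + ((starRingEnd ℂ) z) ^ 2) / (8 * (t : ℂ)) := by
      have : (starRingEnd ℂ) 8 = 8 := map_ofNat _ 8
      simp [map_div₀, Complex.conj_ofReal, Complex.conj_I, this]
      ring
    rw [hUt z, map_mul, map_mul, ← Complex.exp_conj, harg, hUreal s]
    congr 2
    · norm_num [map_div₀, Complex.conj_ofReal]
  constructor
  · rw [hψt₂fun, wD_mul _ _ z hg₂diff hh₂diff, hg₂D, hh₂D, hd1, hUt z, hψt₁ z]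
    simp only [zero_mul, zero_add]
    linear_combination ((1 / (t : ℂ)) * U s * ψ₁ s) * hexp1
  · rw [hψt₁fun, wDBar_mul _ _ z hg₁diff hh₁diff, hg₁DBar, hh₁DBar, hd2, hUtconj, hψt₂ z]
    simp only [zero_mul, add_zero]
    linear_combination ((1 / (t : ℂ)) * U s * ψ₂ s) * hexp2
end

section
/- Pseudo-conformal transformation of Φ-spinors: let t ∈ ℝ, t ≠ 0, and let U, φ₁, φ₂ : ℂ → ℂ be real-differentiable functions with U real-valued such that ∂φ₂(w) + U(w)φ₁(w) = 0 and −∂̄φ₁(w) + U(w)φ₂(w) = 0 for all w ∈ ℂ. Define Ũ(z) = (1/t)·exp(−i(z² + conj(z)²)/(8t))·U(z/t), φ̃₁(z) = exp(−i z²/(8t))·φ₁(z/t), and φ̃₂(z) = exp(i conj(z)²/(8t))·φ₂(z/t). Then for every z ∈ ℂ one has ∂φ̃₂(z) + conj(Ũ(z))·φ̃₁(z) = 0 and −∂̄φ̃₁(z) + Ũ(z)·φ̃₂(z) = 0. -/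
open Complex

lemma fderiv_apply_holo {h : ℂ → ℂ} {h' z : ℂ} (hh : HasDerivAt h h' z) (v : ℂ) :
    fderiv ℝ h z v = h' * v := by
  rw [(hh.hasFDerivAt.restrictScalars ℝ).fderiv]
  simp [smul_eq_mul, mul_comm]

lemma wirtinger_holo {h : ℂ → ℂ} {h' z : ℂ} (hh : HasDerivAt h h' z) :
    wirtingerD h z = h' ∧ wirtingerDBar h z = 0 := by
  unfold wirtingerD wirtingerDBar
  rw [fderiv_apply_holo hh, fderiv_apply_holo hh]
  constructor
  · linear_combination (-h'/2) * Complex.I_sq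
  · linear_combination (h'/2) * Complex.I_sq

lemma fderiv_apply_antiholo {h : ℂ → ℂ} {h' z : ℂ} (hh : HasDerivAt h h' z) (v : ℂ) :
    fderiv ℝ (fun w => (starRingEnd ℂ) (h w)) z v = (starRingEnd ℂ) (h' * v) := by
  have hC : HasFDerivAt (fun w => (starRingEnd ℂ) (h w))
      ((Complex.conjCLE.toContinuousLinearMap).comp
        ((ContinuousLinearMap.smulRight (1 : ℂ →L[ℂ] ℂ) h').restrictScalars ℝ)) z :=
    Complex.conjCLE.toContinuousLinearMap.hasFDerivAt.comp z (hh.hasFDerivAt.restrictScalars ℝ)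
  rw [hC.fderiv]
  simp [smul_eq_mul, mul_comm]

lemma wirtinger_antiholo {h : ℂ → ℂ} {h' z : ℂ} (hh : HasDerivAt h h' z) :
    wirtingerD (fun w => (starRingEnd ℂ) (h w)) z = 0 ∧
    wirtingerDBar (fun w => (starRingEnd ℂ) (h w)) z = (starRingEnd ℂ) h' := by
  unfold wirtingerD wirtingerDBar
  rw [fderiv_apply_antiholo hh, fderiv_apply_antiholo hh]
  simp only [map_mul, Complex.conj_I, mul_one]
  constructor
  · linear_combination ((starRingEnd ℂ) h'/2) * Complex.I_sq
  · linear_combination (-(starRingEnd ℂ) h'/2) * Complex.I_sq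

lemma wirtinger_mul {f g : ℂ → ℂ} {z : ℂ} (hf : DifferentiableAt ℝ f z)
    (hg : DifferentiableAt ℝ g z) :
    wirtingerD (fun w => f w * g w) z = wirtingerD f z * g z + f z * wirtingerD g z ∧
    wirtingerDBar (fun w => f w * g w) z = wirtingerDBar f z * g z + f z * wirtingerDBar g z := by
  unfold wirtingerD wirtingerDBar
  rw [fderiv_fun_mul hf hg]
  simp only [ContinuousLinearMap.add_apply, ContinuousLinearMap.smul_apply, smul_eq_mul]
  constructor <;> ring

lemma wirtinger_comp_div (f : ℂ → ℂ) (hf : Differentiable ℝ f) (t : ℝ) (z : ℂ) :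
    wirtingerD (fun w => f (w / (t:ℂ))) z = (1/(t:ℂ)) * wirtingerD f (z / (t:ℂ)) ∧
    wirtingerDBar (fun w => f (w / (t:ℂ))) z = (1/(t:ℂ)) * wirtingerDBar f (z / (t:ℂ)) := by
  have hL : HasFDerivAt (fun w : ℂ => (t⁻¹ : ℝ) • w) ((t⁻¹ : ℝ) • ContinuousLinearMap.id ℝ ℂ) z :=
    (hasFDerivAt_id z).const_smul (t⁻¹ : ℝ)
  have hsm : ∀ w : ℂ, (t⁻¹ : ℝ) • w = w / (t:ℂ) := by
    intro w
    simp [Complex.real_smul, div_eq_mul_inv, mul_comm]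
  have heq : (fun w : ℂ => f (w / (t:ℂ))) = fun w => f ((t⁻¹:ℝ) • w) := by
    funext w; rw [hsm]
  have hc : HasFDerivAt (fun w : ℂ => f ((t⁻¹:ℝ) • w))
      ((fderiv ℝ f (z / (t:ℂ))).comp ((t⁻¹ : ℝ) • ContinuousLinearMap.id ℝ ℂ)) z := by
    have := (hf ((t⁻¹:ℝ) • z)).hasFDerivAt.comp z hL
    rwa [hsm z] at this
  unfold wirtingerD wirtingerDBar
  rw [heq, hc.fderiv]
  simp only [ContinuousLinearMap.coe_comp', Function.comp_apply, ContinuousLinearMap.smul_apply,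
    ContinuousLinearMap.id_apply, map_smul]
  simp only [Complex.real_smul]
  push_cast
  constructor <;> ring

theorem stmt_3
    (t : ℝ) (ht : t ≠ 0)
    (U φ₁ φ₂ : ℂ → ℂ)
    (hUdiff : Differentiable ℝ U)
    (hφ₁diff : Differentiable ℝ φ₁)
    (hφ₂diff : Differentiable ℝ φ₂)
    (hUreal : ∀ w, (starRingEnd ℂ) (U w) = U w)
    (hdirac₁ : ∀ w, wirtingerD φ₂ w + U w * φ₁ w = 0)
    (hdirac₂ : ∀ w, -wirtingerDBar φ₁ w + U w * φ₂ w = 0)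
    (Ut φt₁ φt₂ : ℂ → ℂ)
    (hUt : ∀ z, Ut z =
      (1 / (t : ℂ)) *
        Complex.exp (-Complex.I * (z ^ 2 + ((starRingEnd ℂ) z) ^ 2) / (8 * (t : ℂ))) *
        U (z / (t : ℂ)))
    (hφt₁ : ∀ z, φt₁ z =
      Complex.exp (-Complex.I * z ^ 2 / (8 * (t : ℂ))) * φ₁ (z / (t : ℂ)))
    (hφt₂ : ∀ z, φt₂ z =
      Complex.exp (Complex.I * ((starRingEnd ℂ) z) ^ 2 / (8 * (t : ℂ))) * φ₂ (z / (t : ℂ))) :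
    ∀ z : ℂ,
      wirtingerD φt₂ z + (starRingEnd ℂ) (Ut z) * φt₁ z = 0 ∧
      -wirtingerDBar φt₁ z + Ut z * φt₂ z = 0 := by
  set τ : ℂ := (t : ℂ) with hτ
  set E : ℂ → ℂ := fun w => Complex.exp (-Complex.I * w ^ 2 / (8 * τ)) with hE
  -- derivative of E
  have hEd : ∀ w : ℂ, HasDerivAt E (E w * (-Complex.I * (2 * w) / (8 * τ))) w := by
    intro w
    have h1 := (((hasDerivAt_pow 2 w).const_mul (-Complex.I)).div_const (8 * τ)).cexp
    simpa [hE] using h1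
  have hEdiff : Differentiable ℝ E := fun w => ((hEd w).differentiableAt).restrictScalars ℝ
  have hconjEdiff : Differentiable ℝ (fun w => (starRingEnd ℂ) (E w)) :=
    Complex.conjCLE.differentiable.comp hEdiff
  have hdivD : Differentiable ℝ (fun w : ℂ => w / τ) := by
    have h : Differentiable ℂ (fun w : ℂ => w / τ) := differentiable_id.div_const τ
    exact h.restrictScalars ℝ
  have hdivdiff : ∀ f : ℂ → ℂ, Differentiable ℝ f →
      Differentiable ℝ (fun w : ℂ => f (w / τ)) := fun f hf => hf.comp hdivD
  -- conj of E
  have hconjE : ∀ w : ℂ, Complex.exp (Complex.I * ((starRingEnd ℂ) w) ^ 2 / (8 * τ)) =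
      (starRingEnd ℂ) (E w) := by
    intro w
    rw [hE, ← Complex.exp_conj]
    congr 1
    simp only [map_div₀, map_mul, map_neg, map_pow, Complex.conj_I, Complex.conj_ofReal,
      map_ofNat, hτ]
    ring
  have hφt₁fun : φt₁ = fun w => E w * φ₁ (w / τ) := funext fun w => hφt₁ w
  have hφt₂fun : φt₂ = fun w => (starRingEnd ℂ) (E w) * φ₂ (w / τ) :=
    funext fun w => by rw [hφt₂ w, hconjE w]
  intro z
  constructor
  · -- first equation
    rw [hφt₂fun]
    rw [(wirtinger_mul (hconjEdiff z) ((hdivdiff φ₂ hφ₂diff) z)).1,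
      (wirtinger_antiholo (hEd z)).1,
      (wirtinger_comp_div φ₂ hφ₂diff t z).1]
    have hd1 : wirtingerD φ₂ (z / τ) = -(U (z / τ) * φ₁ (z / τ)) := by
      linear_combination hdirac₁ (z / τ)
    rw [hd1, hUt z, hφt₁ z]
    simp only [map_mul, map_div₀, map_one, Complex.conj_ofReal, hUreal, hτ]
    have key1 : (starRingEnd ℂ)
          (Complex.exp (-Complex.I * (z ^ 2 + ((starRingEnd ℂ) z) ^ 2) / (8 * (t:ℂ)))) *
        Complex.exp (-Complex.I * z ^ 2 / (8 * (t:ℂ))) = (starRingEnd ℂ) (E z) := by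
      rw [hE, ← Complex.exp_conj, ← Complex.exp_conj, ← Complex.exp_add]
      congr 1
      simp only [map_div₀, map_mul, map_add, map_neg, map_pow, Complex.conj_I,
        Complex.conj_ofReal, map_ofNat, RingHomCompTriple.comp_apply, Complex.conj_conj,
        RingHom.id_apply, hτ]
      ring
    linear_combination (1 / (t:ℂ) * U (z / (t:ℂ)) * φ₁ (z / (t:ℂ))) * key1
  · -- second equation
    rw [hφt₁fun]
    rw [(wirtinger_mul (hEdiff z) ((hdivdiff φ₁ hφ₁diff) z)).2,
      (wirtinger_holo (hEd z)).2,
      (wirtinger_comp_div φ₁ hφ₁diff t z).2]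
    have hd2 : wirtingerDBar φ₁ (z / τ) = U (z / τ) * φ₂ (z / τ) := by
      linear_combination -hdirac₂ (z / τ)
    rw [hd2, hUt z, hφt₂ z]
    have key2 : Complex.exp (-Complex.I * (z ^ 2 + ((starRingEnd ℂ) z) ^ 2) / (8 * τ)) *
        Complex.exp (Complex.I * ((starRingEnd ℂ) z) ^ 2 / (8 * τ)) = E z := by
      rw [hE, ← Complex.exp_add]
      congr 1
      ring
    linear_combination (1 / τ * U (z / τ) * φ₂ (z / τ)) * key2
end

section
/- For every real t ≠ 0, the squared L² norm of the Ozawa solution at time t equals π: ∫_{ℝ²} |Ũ(x + iy, t)|² dx dy = π, where Ũ(z,t) = (1/t)·exp(−i(z² + conj(z)²)/(8t))·1/(1 + |z|²/t²). In particular the squared L² norm is independent of t for t ≠ 0. -/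
open Complex MeasureTheory Set Filter Topology

/-- The Ozawa solution of the Davey–Stewartson II equation:
`Ũ(z,t) = (1/t)·exp(−i(z² + conj(z)²)/(8t))·1/(1 + |z|²/t²)`. -/
noncomputable def ozawaU (z : ℂ) (t : ℝ) : ℂ :=
  (1 / (t : ℂ)) *
    Complex.exp (-Complex.I * (z ^ 2 + ((starRingEnd ℂ) z) ^ 2) / (8 * (t : ℂ))) *
    (1 / (1 + (‖z‖ : ℂ) ^ 2 / (t : ℂ) ^ 2))

lemma norm_ozawa_sq (t : ℝ) (ht : t ≠ 0) (z : ℂ) :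
    ‖ozawaU z t‖ ^ 2 = (1 / t ^ 2) * (1 / (1 + ‖z‖ ^ 2 / t ^ 2)) ^ 2 := by
  have hpos : (0:ℝ) < 1 + ‖z‖ ^ 2 / t ^ 2 := by positivity
  have hre : (-Complex.I * (z ^ 2 + ((starRingEnd ℂ) z) ^ 2) / (8 * (t : ℂ))).re = 0 := by
    have h1 : ((starRingEnd ℂ) z) ^ 2 = (starRingEnd ℂ) (z ^ 2) := by rw [map_pow]
    rw [h1]
    have h2 : z ^ 2 + (starRingEnd ℂ) (z ^ 2) = ((z ^ 2).re * 2 : ℝ) := by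
      rw [Complex.add_conj]; push_cast; ring
    rw [h2]
    simp [Complex.div_re, Complex.normSq]
  have hexp : ‖Complex.exp (-Complex.I * (z ^ 2 + ((starRingEnd ℂ) z) ^ 2) / (8 * (t : ℂ)))‖ = 1 := by
    rw [Complex.norm_exp, hre, Real.exp_zero]
  have hc : (1 + (‖z‖ : ℂ) ^ 2 / (t : ℂ) ^ 2) = ((1 + ‖z‖ ^ 2 / t ^ 2 : ℝ) : ℂ) := by
    push_cast; ring
  rw [ozawaU, norm_mul, norm_mul, hexp, hc]
  simp only [norm_div, norm_one, Complex.norm_real, Real.norm_eq_abs, mul_one]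
  rw [abs_of_pos hpos, mul_pow, div_pow, div_pow, one_pow, _root_.sq_abs t]

lemma radial_integral (t : ℝ) (ht : t ≠ 0) :
    ∫ r in Ioi (0:ℝ), r * ((1 / t ^ 2) * (1 / (1 + r ^ 2 / t ^ 2)) ^ 2) = 1 / 2 := by
  have ht2 : (0:ℝ) < t ^ 2 := by positivity
  have hderiv : ∀ r ∈ Ici (0:ℝ),
      HasDerivAt (fun r : ℝ => -(1/2) * (1 + r ^ 2 / t ^ 2)⁻¹)
        (r * ((1 / t ^ 2) * (1 / (1 + r ^ 2 / t ^ 2)) ^ 2)) r := by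
    intro r _
    have hne : 1 + r ^ 2 / t ^ 2 ≠ 0 := by positivity
    have h1 : HasDerivAt (fun r : ℝ => 1 + r ^ 2 / t ^ 2) (2 * r / t ^ 2) r := by
      have := ((hasDerivAt_pow 2 r).div_const (t ^ 2)).const_add (1:ℝ)
      simpa using this
    have h2 := (h1.inv hne).const_mul (-(1/2) : ℝ)
    refine h2.congr_deriv ?_
    generalize 1 + r ^ 2 / t ^ 2 = a
    ring
  have hlim : Tendsto (fun r : ℝ => -(1/2) * (1 + r ^ 2 / t ^ 2)⁻¹) atTop (𝓝 0) := by
    have h1 : Tendsto (fun r : ℝ => 1 + r ^ 2 / t ^ 2) atTop atTop := by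
      apply tendsto_atTop_add_const_left
      exact (tendsto_pow_atTop (by norm_num)).atTop_div_const ht2
    have := (h1.inv_tendsto_atTop).const_mul (-(1/2) : ℝ)
    simpa using this
  have hnonneg : ∀ r ∈ Ioi (0:ℝ), 0 ≤ r * ((1 / t ^ 2) * (1 / (1 + r ^ 2 / t ^ 2)) ^ 2) := by
    intro r hr
    have : (0:ℝ) < r := hr
    positivity
  rw [integral_Ioi_of_hasDerivAt_of_nonneg' hderiv hnonneg hlim]
  norm_num

theorem stmt_4 (t : ℝ) (ht : t ≠ 0) :
    ∫ p : ℝ × ℝ, ‖ozawaU (p.1 + p.2 * Complex.I) t‖ ^ 2 = Real.pi := by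
  have key : ∀ p : ℝ × ℝ, ‖ozawaU (p.1 + p.2 * Complex.I) t‖ ^ 2
      = (1 / t ^ 2) * (1 / (1 + (p.1 ^ 2 + p.2 ^ 2) / t ^ 2)) ^ 2 := by
    intro p
    rw [norm_ozawa_sq t ht, Complex.sq_norm, Complex.normSq_add_mul_I]
  simp_rw [key]
  rw [← integral_comp_polarCoord_symm
    (fun p : ℝ × ℝ => (1 / t ^ 2) * (1 / (1 + (p.1 ^ 2 + p.2 ^ 2) / t ^ 2)) ^ 2)]
  have heq : ∀ p ∈ polarCoord.target,
      p.1 • ((1 / t ^ 2) * (1 / (1 + ((polarCoord.symm p).1 ^ 2 + (polarCoord.symm p).2 ^ 2) / t ^ 2)) ^ 2)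
        = (fun r : ℝ => r * ((1 / t ^ 2) * (1 / (1 + r ^ 2 / t ^ 2)) ^ 2)) p.1 * (fun _ : ℝ => (1:ℝ)) p.2 := by
    intro p _
    have hs : (polarCoord.symm p).1 ^ 2 + (polarCoord.symm p).2 ^ 2 = p.1 ^ 2 := by
      simp only [polarCoord, OpenPartialHomeomorph.coe_mk_symm, PartialEquiv.coe_symm_mk]
      rw [mul_pow, mul_pow, ← mul_add, Real.cos_sq_add_sin_sq, mul_one]
    rw [hs, smul_eq_mul]
    ring
  rw [setIntegral_congr_fun polarCoord.open_target.measurableSet heq]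
  rw [polarCoord_target, Measure.volume_eq_prod,
    setIntegral_prod_mul (fun r : ℝ => r * ((1 / t ^ 2) * (1 / (1 + r ^ 2 / t ^ 2)) ^ 2))
      (fun _ : ℝ => (1:ℝ)) (Ioi 0) (Ioo (-Real.pi) Real.pi)]
  rw [radial_integral t ht]
  rw [setIntegral_const, smul_eq_mul, mul_one, Real.volume_real_Ioo_of_le (by linarith [Real.pi_pos])]
  rw [show Real.pi - -Real.pi = 2 * Real.pi by ring]
  ring
end

section
/- For every real t ≠ 0, the spinor ψ̃₁(z) = (t·conj(z)/(t² + |z|²))·exp(i z²/(8t)), ψ̃₂(z) = (t²/(t² + |z|²))·exp(−i conj(z)²/(8t)) solves the Dirac equation with the Ozawa potential Ũ(z,t) = (1/t)·exp(−i(z² + conj(z)²)/(8t))·1/(1 + |z|²/t²); that is, for all z ∈ ℂ, ∂ψ̃₂(z) + Ũ(z,t)·ψ̃₁(z) = 0 and −∂̄ψ̃₁(z) + conj(Ũ(z,t))·ψ̃₂(z) = 0. -/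
open Complex

/-- The conjugation map as a real-continuous-linear map. -/
noncomputable def Cj : ℂ →L[ℝ] ℂ := Complex.conjCLE

lemma hconj (z : ℂ) : HasFDerivAt (fun w => (starRingEnd ℂ) w) Cj z :=
  Complex.conjCLE.hasFDerivAt

lemma norm_sq_eq (z : ℂ) : (‖z‖ : ℂ)^2 = z * (starRingEnd ℂ) z := by
  rw [Complex.mul_conj]; norm_cast
  rw [← Complex.sq_norm]

section
variable (t : ℝ) (z : ℂ)

lemma Dne (ht : t ≠ 0) : (t:ℂ)^2 + z * (starRingEnd ℂ) z ≠ 0 := by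
  have h : (t:ℂ)^2 + z * (starRingEnd ℂ) z = ((t^2 + Complex.normSq z : ℝ) : ℂ) := by
    rw [Complex.mul_conj]; push_cast; ring
  rw [h, Complex.ofReal_ne_zero]
  have h1 : 0 < t^2 := by positivity
  have h2 := Complex.normSq_nonneg z
  intro h3; linarith [h3 ▸ h1]

lemma hD : HasFDerivAt (fun w => (t:ℂ)^2 + w * (starRingEnd ℂ) w)
    (z • Cj + (ContinuousLinearMap.id ℝ ℂ).smulRight ((starRingEnd ℂ) z)) z :=
  ((hasFDerivAt_id z).mul' (hconj z)).const_add _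

lemma hinv (ht : t ≠ 0) : HasFDerivAt (fun w => ((t:ℂ)^2 + w * (starRingEnd ℂ) w)⁻¹)
    ((-(((t:ℂ)^2 + z * (starRingEnd ℂ) z) ^ 2)⁻¹) •
      (z • Cj + (ContinuousLinearMap.id ℝ ℂ).smulRight ((starRingEnd ℂ) z))) z :=
  (hasDerivAt_inv (Dne t z ht)).comp_hasFDerivAt z (hD t z)

lemma harg2 (ht : t ≠ 0) : HasFDerivAt (fun w => -Complex.I * ((starRingEnd ℂ) w)^2 / (8*(t:ℂ)))
    ((-Complex.I * (starRingEnd ℂ) z / (4*(t:ℂ))) • Cj) z := by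
  have hg : HasDerivAt (fun w : ℂ => -Complex.I * w^2 / (8*(t:ℂ)))
      (-Complex.I * (starRingEnd ℂ) z / (4*(t:ℂ))) ((starRingEnd ℂ) z) := by
    have h := ((hasDerivAt_pow 2 ((starRingEnd ℂ) z)).const_mul (-Complex.I)).div_const (8*(t:ℂ))
    refine h.congr_deriv ?_
    have ht' : (t:ℂ) ≠ 0 := Complex.ofReal_ne_zero.mpr ht
    field_simp; ring
  exact hg.comp_hasFDerivAt z (hconj z)

lemma hexp2 (ht : t ≠ 0) :
    HasFDerivAt (fun w => Complex.exp (-Complex.I * ((starRingEnd ℂ) w)^2 / (8*(t:ℂ))))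
    (Complex.exp (-Complex.I * ((starRingEnd ℂ) z)^2 / (8*(t:ℂ))) •
      ((-Complex.I * (starRingEnd ℂ) z / (4*(t:ℂ))) • Cj)) z :=
  (Complex.hasDerivAt_exp _).comp_hasFDerivAt z (harg2 t z ht)

lemma hpsi2 (ht : t ≠ 0) : HasFDerivAt
    (fun w => ((t:ℂ)^2 * ((t:ℂ)^2 + w * (starRingEnd ℂ) w)⁻¹) *
      Complex.exp (-Complex.I * ((starRingEnd ℂ) w)^2 / (8*(t:ℂ))))
    ((((t:ℂ)^2 * ((t:ℂ)^2 + z * (starRingEnd ℂ) z)⁻¹) •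
        (Complex.exp (-Complex.I * ((starRingEnd ℂ) z)^2 / (8*(t:ℂ))) •
          ((-Complex.I * (starRingEnd ℂ) z / (4*(t:ℂ))) • Cj))) +
      (((t:ℂ)^2) • ((-(((t:ℂ)^2 + z * (starRingEnd ℂ) z) ^ 2)⁻¹) •
        (z • Cj + (ContinuousLinearMap.id ℝ ℂ).smulRight ((starRingEnd ℂ) z)))).smulRight
        (Complex.exp (-Complex.I * ((starRingEnd ℂ) z)^2 / (8*(t:ℂ))))) z :=
  ((hinv t z ht).const_mul _).mul' (hexp2 t z ht)

lemma hexp1 (ht : t ≠ 0) :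
    HasFDerivAt (fun w => Complex.exp (Complex.I * w^2 / (8*(t:ℂ))))
    (((ContinuousLinearMap.smulRight (1 : ℂ →L[ℂ] ℂ)
        (Complex.exp (Complex.I * z^2 / (8*(t:ℂ))) *
          (Complex.I * z / (4*(t:ℂ))))).restrictScalars ℝ)) z := by
  have hg : HasDerivAt (fun w : ℂ => Complex.I * w^2 / (8*(t:ℂ)))
      (Complex.I * z / (4*(t:ℂ))) z := by
    have h := ((hasDerivAt_pow 2 z).const_mul Complex.I).div_const (8*(t:ℂ))
    refine h.congr_deriv ?_
    have ht' : (t:ℂ) ≠ 0 := Complex.ofReal_ne_zero.mpr ht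
    field_simp; ring
  have h2 : HasDerivAt (fun w => Complex.exp (Complex.I * w^2 / (8*(t:ℂ))))
      (Complex.exp (Complex.I * z^2 / (8*(t:ℂ))) * (Complex.I * z / (4*(t:ℂ)))) z :=
    (Complex.hasDerivAt_exp _).comp z hg
  exact (h2.hasFDerivAt).restrictScalars ℝ

lemma hpsi1 (ht : t ≠ 0) : HasFDerivAt
    (fun w => (((t:ℂ) * (starRingEnd ℂ) w) * ((t:ℂ)^2 + w * (starRingEnd ℂ) w)⁻¹) *
      Complex.exp (Complex.I * w^2 / (8*(t:ℂ))))
    ((((t:ℂ) * (starRingEnd ℂ) z) * ((t:ℂ)^2 + z * (starRingEnd ℂ) z)⁻¹) •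
        ((ContinuousLinearMap.smulRight (1 : ℂ →L[ℂ] ℂ)
          (Complex.exp (Complex.I * z^2 / (8*(t:ℂ))) *
            (Complex.I * z / (4*(t:ℂ))))).restrictScalars ℝ) +
      ((((t:ℂ) * (starRingEnd ℂ) z) • ((-(((t:ℂ)^2 + z * (starRingEnd ℂ) z) ^ 2)⁻¹) •
          (z • Cj + (ContinuousLinearMap.id ℝ ℂ).smulRight ((starRingEnd ℂ) z)))) +
        (((t:ℂ) • Cj).smulRight (((t:ℂ)^2 + z * (starRingEnd ℂ) z)⁻¹))).smulRight
        (Complex.exp (Complex.I * z^2 / (8*(t:ℂ))))) z :=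
  (((hconj z).const_mul ((t:ℂ))).mul' (hinv t z ht)).mul' (hexp1 t z ht)
end

set_option maxHeartbeats 2000000 in
theorem stmt_8 (t : ℝ) (ht : t ≠ 0)
    (ψt₁ ψt₂ : ℂ → ℂ)
    (hψt₁ : ∀ z, ψt₁ z =
      ((t : ℂ) * (starRingEnd ℂ) z / ((t : ℂ) ^ 2 + (‖z‖ : ℂ) ^ 2)) *
        Complex.exp (Complex.I * z ^ 2 / (8 * (t : ℂ))))
    (hψt₂ : ∀ z, ψt₂ z =
      ((t : ℂ) ^ 2 / ((t : ℂ) ^ 2 + (‖z‖ : ℂ) ^ 2)) *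
        Complex.exp (-Complex.I * ((starRingEnd ℂ) z) ^ 2 / (8 * (t : ℂ)))) :
    ∀ z : ℂ,
      wirtingerD ψt₂ z + ozawaU z t * ψt₁ z = 0 ∧
      -wirtingerDBar ψt₁ z + (starRingEnd ℂ) (ozawaU z t) * ψt₂ z = 0 := by
  intro z
  have ht' : (t:ℂ) ≠ 0 := Complex.ofReal_ne_zero.mpr ht
  have hDne := Dne t z ht
  have hI2 : Complex.I^2 = -1 := Complex.I_sq
  have hI3 : Complex.I^3 = -Complex.I := by rw [pow_succ, hI2]; ring
  have hI4 : Complex.I^4 = 1 := by rw [pow_succ, hI3]; simp [Complex.I_mul_I]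
  have hfun2 : ψt₂ = fun w => ((t:ℂ)^2 * ((t:ℂ)^2 + w * (starRingEnd ℂ) w)⁻¹) *
      Complex.exp (-Complex.I * ((starRingEnd ℂ) w)^2 / (8*(t:ℂ))) := by
    funext w; rw [hψt₂ w, norm_sq_eq w, div_eq_mul_inv]
  have hfun1 : ψt₁ = fun w => (((t:ℂ) * (starRingEnd ℂ) w) * ((t:ℂ)^2 + w * (starRingEnd ℂ) w)⁻¹) *
      Complex.exp (Complex.I * w^2 / (8*(t:ℂ))) := by
    funext w; rw [hψt₁ w, norm_sq_eq w, div_eq_mul_inv]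
  have hf2 := (hfun2 ▸ hpsi2 t z ht).fderiv
  have hf1 := (hfun1 ▸ hpsi1 t z ht).fderiv
  constructor
  · have hE : Complex.exp (-Complex.I * (z ^ 2 + ((starRingEnd ℂ) z) ^ 2) / (8 * (t : ℂ))) *
        Complex.exp (Complex.I * z ^ 2 / (8 * (t : ℂ))) =
        Complex.exp (-Complex.I * ((starRingEnd ℂ) z) ^ 2 / (8 * (t : ℂ))) := by
      rw [← Complex.exp_add]; congr 1; field_simp; ring
    rw [wirtingerD, hf2, ozawaU, hψt₁ z, norm_sq_eq z]
    simp only [ContinuousLinearMap.add_apply, ContinuousLinearMap.coe_smul', Pi.smul_apply,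
      ContinuousLinearMap.smulRight_apply, ContinuousLinearMap.id_apply, smul_eq_mul,
      Cj, ContinuousLinearEquiv.coe_coe, Complex.conjCLE_apply, map_one, Complex.conj_I]
    rw [← hE]
    generalize Complex.exp (-Complex.I * (z ^ 2 + ((starRingEnd ℂ) z) ^ 2) / (8 * (t:ℂ))) = A
    generalize Complex.exp (Complex.I * z ^ 2 / (8 * (t:ℂ))) = B
    field_simp
    rw [mul_zero]
    ring_nf
    simp only [hI2, hI3, hI4]
    ring_nf
  · have hcU : (starRingEnd ℂ) (ozawaU z t) =
        (1 / (t : ℂ)) *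
          Complex.exp (Complex.I * (z ^ 2 + ((starRingEnd ℂ) z) ^ 2) / (8 * (t : ℂ))) *
          (1 / (1 + (z * (starRingEnd ℂ) z) / (t : ℂ) ^ 2)) := by
      rw [ozawaU, norm_sq_eq z]
      simp only [map_mul, map_div₀, map_add, map_pow, map_one, map_neg, Complex.conj_I,
        Complex.conj_ofReal, ← Complex.exp_conj, Complex.conj_conj, map_ofNat]
      ring_nf
    have hE2 : Complex.exp (Complex.I * (z ^ 2 + ((starRingEnd ℂ) z) ^ 2) / (8 * (t : ℂ))) *
        Complex.exp (-Complex.I * ((starRingEnd ℂ) z) ^ 2 / (8 * (t : ℂ))) =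
        Complex.exp (Complex.I * z ^ 2 / (8 * (t : ℂ))) := by
      rw [← Complex.exp_add]; congr 1; field_simp; ring
    rw [wirtingerDBar, hf1, hcU, hψt₂ z, norm_sq_eq z]
    simp only [ContinuousLinearMap.add_apply, ContinuousLinearMap.coe_smul', Pi.smul_apply,
      ContinuousLinearMap.smulRight_apply, ContinuousLinearMap.id_apply, smul_eq_mul,
      ContinuousLinearMap.coe_restrictScalars', ContinuousLinearMap.one_apply,
      Cj, ContinuousLinearEquiv.coe_coe, Complex.conjCLE_apply, map_one, Complex.conj_I]
    rw [← hE2]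
    generalize Complex.exp (Complex.I * (z ^ 2 + ((starRingEnd ℂ) z) ^ 2) / (8 * (t:ℂ))) = A
    generalize Complex.exp (-Complex.I * ((starRingEnd ℂ) z) ^ 2 / (8 * (t:ℂ))) = B
    field_simp
    rw [mul_zero, div_eq_zero_iff]
    left
    ring_nf
    simp only [hI2, hI3, hI4]
    ring_nf
end

section
/- For every real t ≠ 0, the spinor φ̃₁(z) = (t·conj(z)/(t² + |z|²))·exp(−i z²/(8t)), φ̃₂(z) = (t²/(t² + |z|²))·exp(i conj(z)²/(8t)) solves the conjugate Dirac equation with the Ozawa potential Ũ(z,t) = (1/t)·exp(−i(z² + conj(z)²)/(8t))·1/(1 + |z|²/t²); that is, for all z ∈ ℂ, ∂φ̃₂(z) + conj(Ũ(z,t))·φ̃₁(z) = 0 and −∂̄φ̃₁(z) + Ũ(z,t)·φ̃₂(z) = 0. -/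
open Complex

noncomputable def conjCLM : ℂ →L[ℝ] ℂ := Complex.conjCLE.toContinuousLinearMap

@[simp] lemma conjCLM_apply (v : ℂ) : conjCLM v = (starRingEnd ℂ) v := rfl

lemma hasFDerivAt_conj' (z : ℂ) : HasFDerivAt (fun w => (starRingEnd ℂ) w) conjCLM z :=
  conjCLM.hasFDerivAt

lemma wirtingerD_eq_of {f : ℂ → ℂ} {z a b : ℂ} {L : ℂ →L[ℝ] ℂ} (h : HasFDerivAt f L z)
    (h1 : L 1 = a + b) (hI : L Complex.I = a * Complex.I - b * Complex.I) :
    wirtingerD f z = a := by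
  unfold wirtingerD
  rw [h.fderiv, h1, hI]
  linear_combination ((b - a)/2) * Complex.I_mul_I

lemma wirtingerDBar_eq_of {f : ℂ → ℂ} {z a b : ℂ} {L : ℂ →L[ℝ] ℂ} (h : HasFDerivAt f L z)
    (h1 : L 1 = a + b) (hI : L Complex.I = a * Complex.I - b * Complex.I) :
    wirtingerDBar f z = b := by
  unfold wirtingerDBar
  rw [h.fderiv, h1, hI]
  linear_combination ((a - b)/2) * Complex.I_mul_I

set_option maxHeartbeats 1600000 in
theorem stmt_9 (t : ℝ) (ht : t ≠ 0)
    (φt₁ φt₂ : ℂ → ℂ)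
    (hφt₁ : ∀ z, φt₁ z =
      ((t : ℂ) * (starRingEnd ℂ) z / ((t : ℂ) ^ 2 + (‖z‖ : ℂ) ^ 2)) *
        Complex.exp (-Complex.I * z ^ 2 / (8 * (t : ℂ))))
    (hφt₂ : ∀ z, φt₂ z =
      ((t : ℂ) ^ 2 / ((t : ℂ) ^ 2 + (‖z‖ : ℂ) ^ 2)) *
        Complex.exp (Complex.I * ((starRingEnd ℂ) z) ^ 2 / (8 * (t : ℂ)))) :
    ∀ z : ℂ,
      wirtingerD φt₂ z + (starRingEnd ℂ) (ozawaU z t) * φt₁ z = 0 ∧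
      -wirtingerDBar φt₁ z + ozawaU z t * φt₂ z = 0 := by
  intro z
  have htC : (t : ℂ) ≠ 0 := by exact_mod_cast ht
  have hne : (t:ℂ)^2 + z * (starRingEnd ℂ) z ≠ 0 := by
    rw [Complex.mul_conj']
    have h1 : ((t:ℂ)^2 + (‖z‖:ℂ)^2) = ((t^2 + ‖z‖^2 : ℝ) : ℂ) := by push_cast; ring
    rw [h1]
    exact_mod_cast ne_of_gt (by positivity)
  have hid := hasFDerivAt_id (𝕜 := ℝ) z
  have hconj := hasFDerivAt_conj' z
  have hden : HasFDerivAt (fun w : ℂ => (t:ℂ)^2 + w * (starRingEnd ℂ) w)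
      (z • conjCLM + ((starRingEnd ℂ) z) • (ContinuousLinearMap.id ℝ ℂ)) z :=
    (hid.mul hconj).const_add ((t:ℂ)^2)
  have hinv : HasFDerivAt (fun w : ℂ => ((t:ℂ)^2 + w * (starRingEnd ℂ) w)⁻¹)
      (((ContinuousLinearMap.smulRight (1 : ℂ →L[ℂ] ℂ)
          (-(((t:ℂ)^2 + z * (starRingEnd ℂ) z)^2)⁻¹)).restrictScalars ℝ).comp
        (z • conjCLM + ((starRingEnd ℂ) z) • (ContinuousLinearMap.id ℝ ℂ))) z :=
    ((hasFDerivAt_inv hne).restrictScalars ℝ).comp z hden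
  have hφ2 : φt₂ = (fun w : ℂ => (t:ℂ)^2 * ((t:ℂ)^2 + w * (starRingEnd ℂ) w)⁻¹ *
      Complex.exp (Complex.I/(8*(t:ℂ)) * ((starRingEnd ℂ) w * (starRingEnd ℂ) w))) := by
    funext w
    rw [hφt₂ w, ← Complex.mul_conj', div_eq_mul_inv]
    congr 1
    congr 1
    ring
  have hφ1 : φt₁ = (fun w : ℂ => (t:ℂ) * (starRingEnd ℂ) w * ((t:ℂ)^2 + w * (starRingEnd ℂ) w)⁻¹ *
      Complex.exp (-Complex.I/(8*(t:ℂ)) * (w * w))) := by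
    funext w
    rw [hφt₁ w, ← Complex.mul_conj', div_eq_mul_inv]
    congr 1
    congr 1
    ring
  have hE2 := (((hconj.mul hconj).const_mul (Complex.I/(8*(t:ℂ))))).cexp
  have hE1 := (((hid.mul hid).const_mul (-Complex.I/(8*(t:ℂ))))).cexp
  have hf2 := (hinv.const_mul ((t:ℂ)^2)).mul hE2
  have hf1 := ((hconj.const_mul (t:ℂ)).mul hinv).mul hE1
  have hUc : (starRingEnd ℂ) (ozawaU z t) =
      (1/(t:ℂ)) * Complex.exp (Complex.I * (z^2 + ((starRingEnd ℂ) z)^2)/(8*(t:ℂ))) *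
        (1/(1 + z * (starRingEnd ℂ) z/(t:ℂ)^2)) := by
    unfold ozawaU
    rw [← Complex.mul_conj']
    simp only [map_mul, map_div₀, map_add, map_one, map_pow, map_neg, Complex.conj_I,
      Complex.conj_conj, Complex.conj_ofReal, map_ofNat, ← Complex.exp_conj]
    ring_nf
  have hU : ozawaU z t =
      (1/(t:ℂ)) * Complex.exp (-Complex.I * (z^2 + ((starRingEnd ℂ) z)^2)/(8*(t:ℂ))) *
        (1/(1 + z * (starRingEnd ℂ) z/(t:ℂ)^2)) := by
    unfold ozawaU
    rw [← Complex.mul_conj']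
  set c := (starRingEnd ℂ) z with hc
  set den := (t:ℂ)^2 + z * c with hdeneq
  set E := Complex.exp (Complex.I/(8*(t:ℂ)) * (c * c)) with hE
  set F := Complex.exp (-Complex.I/(8*(t:ℂ)) * (z * z)) with hF
  clear_value c den E F
  have hne' : (t:ℂ)^2 + z * c ≠ 0 := hdeneq ▸ hne
  have hE0 : E ≠ 0 := hE ▸ Complex.exp_ne_zero _
  have hF0 : F ≠ 0 := hF ▸ Complex.exp_ne_zero _
  have hdne : den ≠ 0 := hne
  have hD2 : wirtingerD φt₂ z = -((t:ℂ)^2 * c / den^2) * E := by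
    rw [hφ2]
    refine wirtingerD_eq_of (b := (Complex.I*c*(t:ℂ)/(4*den) - (t:ℂ)^2*z/den^2) * E) hf2 ?_ ?_ <;>
    · subst hdeneq
      simp only [ContinuousLinearMap.add_apply, ContinuousLinearMap.coe_smul', Pi.smul_apply,
        ContinuousLinearMap.coe_comp', Function.comp_apply,
        ContinuousLinearMap.coe_restrictScalars', ContinuousLinearMap.smulRight_apply,
        ContinuousLinearMap.one_apply, ContinuousLinearMap.id_apply, conjCLM_apply,
        map_one, Complex.conj_I, smul_eq_mul, mul_one, Pi.mul_apply, ← hc, ← hE]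
      field_simp [htC, hne']
      all_goals ring
  have hDb1 : wirtingerDBar φt₁ z = (t:ℂ)^3 / den^2 * F := by
    rw [hφ1]
    refine wirtingerDBar_eq_of (a := (-(t:ℂ)*c^2/den^2 - Complex.I*z*c/(4*den)) * F) hf1 ?_ ?_ <;>
    · subst hdeneq
      simp only [ContinuousLinearMap.add_apply, ContinuousLinearMap.coe_smul', Pi.smul_apply,
        ContinuousLinearMap.coe_comp', Function.comp_apply,
        ContinuousLinearMap.coe_restrictScalars', ContinuousLinearMap.smulRight_apply,
        ContinuousLinearMap.one_apply, ContinuousLinearMap.id_apply, conjCLM_apply,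
        map_one, Complex.conj_I, smul_eq_mul, mul_one, Pi.mul_apply, id_eq, ← hc, ← hF]
      field_simp [htC, hne']
      all_goals ring
  set A := Complex.exp (Complex.I * z^2/(8*(t:ℂ))) with hA
  clear_value A
  have hA0 : A ≠ 0 := hA ▸ Complex.exp_ne_zero _
  have hsplit : Complex.exp (Complex.I * (z^2 + c^2)/(8*(t:ℂ))) = A * E := by
    rw [hA, hE, ← Complex.exp_add]
    congr 1
    field_simp
  have hsplit' : Complex.exp (-Complex.I * (z^2 + c^2)/(8*(t:ℂ))) = A⁻¹ * E⁻¹ := by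
    rw [hA, hE, ← Complex.exp_neg, ← Complex.exp_neg, ← Complex.exp_add]
    congr 1
    field_simp
    ring
  have hphi1exp : Complex.exp (-Complex.I * z^2/(8*(t:ℂ))) = A⁻¹ := by
    rw [hA, ← Complex.exp_neg]
    congr 1
    ring
  have hphi2exp : Complex.exp (Complex.I * c^2/(8*(t:ℂ))) = E := by
    rw [hE]
    congr 1
    ring
  have hFA : F = A⁻¹ := by
    rw [hF, hA, ← Complex.exp_neg]
    congr 1
    ring
  have hden2 : (1 : ℂ) + z * c/(t:ℂ)^2 ≠ 0 := by
    intro h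
    apply hne
    have h2 := congrArg (fun x => x * (t:ℂ)^2) h
    simp only [add_mul, one_mul, zero_mul] at h2
    rw [div_mul_cancel₀ _ (pow_ne_zero 2 htC)] at h2
    rw [hdeneq]
    linear_combination h2
  have hrw : (1:ℂ)/(1 + z * c/(t:ℂ)^2) = (t:ℂ)^2/den := by
    rw [hdeneq, div_eq_div_iff hden2 hne']
    field_simp
    all_goals ring
  constructor
  · rw [hD2, hUc, hφt₁ z, ← Complex.mul_conj', hsplit, hphi1exp, hrw, ← hc, ← hdeneq]
    field_simp [htC, hne', hdne, hA0, hE0]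
    all_goals ring
  · rw [hDb1, hU, hφt₂ z, ← Complex.mul_conj', ← hc, hsplit', hphi2exp, hFA, hrw, ← hdeneq]
    field_simp [htC, hne', hdne, hA0, hE0]
    have hD : (t:ℂ) * (A * E) * den * den ≠ 0 :=
      mul_ne_zero (mul_ne_zero (mul_ne_zero htC (mul_ne_zero hA0 hE0)) hdne) hdne
    have hkey : (t:ℂ) ^ 2 * ((t:ℂ) ^ 2 * E) * (den ^ 2 * A) / ((t:ℂ) * (A * E) * den * den) =
        (t:ℂ) ^ 3 := by
      rw [div_eq_iff hD]; ring
    ring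
end

section
/- Exact antiderivative, off-diagonal entry: for every real t ≠ 0, the function G(z) = −i t²·conj(z)/(t² + |z|²) satisfies ∂G(z) = i t²·conj(z)²/(t² + |z|²)² and ∂̄G(z) = −i t⁴/(t² + |z|²)² for all z ∈ ℂ. -/
open Complex

theorem stmt_12 (t : ℝ) (ht : t ≠ 0)
    (G : ℂ → ℂ)
    (hG : ∀ z, G z =
      -Complex.I * (t : ℂ) ^ 2 * (starRingEnd ℂ) z / ((t : ℂ) ^ 2 + (‖z‖ : ℂ) ^ 2)) :
    ∀ z : ℂ,
      wirtingerD G z =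
        Complex.I * (t : ℂ) ^ 2 * ((starRingEnd ℂ) z) ^ 2 /
          ((t : ℂ) ^ 2 + (‖z‖ : ℂ) ^ 2) ^ 2 ∧
      wirtingerDBar G z =
        -Complex.I * (t : ℂ) ^ 4 / ((t : ℂ) ^ 2 + (‖z‖ : ℂ) ^ 2) ^ 2 := by
  intro z
  have hn : ∀ w : ℂ, ((‖w‖ : ℂ))^2 = w * (starRingEnd ℂ) w := by
    intro w
    rw [mul_conj]; norm_cast
    exact Complex.sq_norm w
  have hd0 : (t : ℂ)^2 + z * (starRingEnd ℂ) z ≠ 0 := by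
    rw [mul_conj]
    intro h
    have h2 : (t:ℝ)^2 + normSq z = 0 := by exact_mod_cast h
    have ha := abs_pos.mpr ht
    have hpos : 0 < (t:ℝ)^2 + normSq z := by nlinarith [_root_.sq_abs t, normSq_nonneg z]
    linarith
  have hN : HasFDerivAt (fun w : ℂ => -Complex.I * (t : ℂ)^2 * (starRingEnd ℂ) w)
      ((-Complex.I * (t : ℂ)^2) • (Complex.conjCLE : ℂ →L[ℝ] ℂ)) z :=
    (Complex.conjCLE.hasFDerivAt (x := z)).const_mul (-Complex.I * (t : ℂ)^2)
  have hD : HasFDerivAt (fun w : ℂ => (t : ℂ)^2 + w * (starRingEnd ℂ) w)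
      (z • (Complex.conjCLE : ℂ →L[ℝ] ℂ) +
        ((starRingEnd ℂ) z) • (ContinuousLinearMap.id ℝ ℂ)) z :=
    ((hasFDerivAt_id z).mul (Complex.conjCLE.hasFDerivAt (x := z))).const_add ((t : ℂ)^2)
  have hinv := (hasFDerivAt_inv' (𝕜 := ℝ) hd0).comp z hD
  have hmul := hN.mul hinv
  have hGeq : G = fun w : ℂ => (-Complex.I * (t : ℂ)^2 * (starRingEnd ℂ) w) *
      ((t : ℂ)^2 + w * (starRingEnd ℂ) w)⁻¹ := by
    funext w
    rw [hG w, hn w, div_eq_mul_inv]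
  have hder : HasFDerivAt G ((-Complex.I * (t : ℂ)^2 * (starRingEnd ℂ) z) •
        ((-((ContinuousLinearMap.mulLeftRight ℝ ℂ) ((t : ℂ)^2 + z * (starRingEnd ℂ) z)⁻¹)
            ((t : ℂ)^2 + z * (starRingEnd ℂ) z)⁻¹).comp
          (z • (Complex.conjCLE : ℂ →L[ℝ] ℂ) +
            ((starRingEnd ℂ) z) • ContinuousLinearMap.id ℝ ℂ)) +
      ((t : ℂ)^2 + z * (starRingEnd ℂ) z)⁻¹ • (-Complex.I * (t : ℂ)^2) •
        (Complex.conjCLE : ℂ →L[ℝ] ℂ)) z := by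
    rw [hGeq]; exact hmul
  have hf := hder.fderiv
  constructor <;>
  · simp only [wirtingerD, wirtingerDBar, hf, ContinuousLinearMap.add_apply,
      ContinuousLinearMap.smul_apply, ContinuousLinearMap.comp_apply,
      ContinuousLinearMap.neg_apply, ContinuousLinearMap.mulLeftRight_apply,
      ContinuousLinearMap.id_apply, Complex.conjCLE_apply, map_one, Complex.conj_I,
      smul_eq_mul, ContinuousLinearEquiv.coe_coe]
    rw [hn z]
    field_simp
    ring_nf
    simp only [Complex.I_sq, show Complex.I ^ 3 = -Complex.I by
      rw [pow_succ, Complex.I_sq]; ring]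
    ring
end
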